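/- arXiv:1808.03553 — 2 statements merged into one kernel-verified Lean document; each statement's English description precedes it below -/
import Mathlib

section
/- Let A, B be strings of lengths m and n, σ a character, and define Diff[i,j] = LCS(B[i..n], σ·A[0..j]) − P[i,j] for (i,j) ∈ [0:n]×[0:m]. Assume every row and every column of P□ contains at most one nonzero entry and every nonzero entry of P□ equals −1. Fix i ∈ [1:n], let k = nextmatch(i,σ,B), and if k < ∞ let j_min = min{ j' ∈ [1:m] : ∃ i' with i+1 ≤ i' ≤ k and P□[i',j'] ≠ 0 } (j_min = ∞ if there are no such pivotal points). Then, considering only columns j ∈ [1:m] of the density matrix Diff□: (1) if B[i] ≠ σ, then row i of Diff□ contains a nonzero entry if and only if k < ∞ and there is a pivotal point (i,j) of P□ with j < j_min; and when these conditions hold, Diff□[i,j] = 1, Diff□[i,j_min] = −1 if j_min < ∞, and all other entries of row i of Diff□ are 0. (2) if B[i] = σ, then Diff□[i,j_min] = −1 provided k < ∞ and j_min < ∞; moreover if (i,j) is a pivotal point of P□ then Diff□[i,j] = 1; and all other entries of row i of Diff□ are 0. -/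
variable {α : Type*}

/-- LCS of two lists: the maximum length of a common sublist. -/
noncomputable def LCS (X Y : List α) : ℕ :=
  sSup {k | ∃ Z : List α, Z.length = k ∧ Z.Sublist X ∧ Z.Sublist Y}

/-- `substr S i j` is S[i..j]: the characters of S at (1-based) positions i+1,…,j. -/
def substr (S : List α) (i j : ℕ) : List α := (S.take j).drop i

/-- The density matrix D□ of a matrix D. -/
def density (D : ℕ → ℕ → ℤ) (i j : ℕ) : ℤ :=
  D i j + D (i - 1) (j - 1) - D (i - 1) j - D i (j - 1)

/-- The all scores matrix K of A and B: K[i,j] = LCS(B[i..j], A) if i ≤ j, else j - i. -/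
noncomputable def Kmat (A B : List α) (i j : ℕ) : ℤ :=
  if i ≤ j then (LCS (substr B i j) A : ℤ) else (j : ℤ) - (i : ℤ)

/-- The all scores matrix P of A and B: P[i,j] = LCS(B[i..n], A[0..j]). -/
noncomputable def Pmat (A B : List α) (i j : ℕ) : ℤ :=
  (LCS (substr B i B.length) (substr A 0 j) : ℤ)

/-- nextmatch(i,σ,B): minimum (1-based) position i' with i < i' ≤ |B| and B[i'] = σ; ⊤ (∞) if none. -/
noncomputable def nextmatch (i : ℕ) (σ : α) (B : List α) : ℕ∞ :=
  sInf {k : ℕ∞ | ∃ k' : ℕ, k = (k' : ℕ∞) ∧ i < k' ∧ k' ≤ B.length ∧ B[k' - 1]? = some σ}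

/-- prevmatch(j,σ,B): maximum (1-based) position i' with 1 ≤ i' ≤ j and B[i'] = σ; ⊥ (−∞) if none. -/
noncomputable def prevmatch (j : ℕ) (σ : α) (B : List α) : WithBot ℕ :=
  sSup {k : WithBot ℕ | ∃ k' : ℕ, k = (k' : WithBot ℕ) ∧ 1 ≤ k' ∧ k' ≤ j ∧ B[k' - 1]? = some σ}

/-- j_min: the minimum column index (in [1:m]) among all pivotal points of P□
in rows i+1,…,k; ∞ (⊤) if there are no such pivotal points. -/
noncomputable def jminP (A B : List α) (m i k : ℕ) : ℕ∞ :=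
  sInf {j : ℕ∞ | ∃ j' : ℕ, j = (j' : ℕ∞) ∧ 1 ≤ j' ∧ j' ≤ m ∧
    ∃ i', i + 1 ≤ i' ∧ i' ≤ k ∧ density (Pmat A B) i' j' ≠ 0}


lemma lcs_bdd (X Y : List α) : BddAbove {k | ∃ Z : List α, Z.length = k ∧ Z.Sublist X ∧ Z.Sublist Y} :=
  ⟨X.length, fun _ ⟨_, hl, hx, _⟩ => hl ▸ hx.length_le⟩

lemma lcs_ne (X Y : List α) : {k | ∃ Z : List α, Z.length = k ∧ Z.Sublist X ∧ Z.Sublist Y}.Nonempty :=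
  ⟨0, [], rfl, List.nil_sublist X, List.nil_sublist Y⟩

lemma exists_lcs (X Y : List α) : ∃ Z : List α, Z.length = LCS X Y ∧ Z.Sublist X ∧ Z.Sublist Y :=
  Nat.sSup_mem (lcs_ne X Y) (lcs_bdd X Y)

lemma le_lcs {X Y Z : List α} (hx : Z.Sublist X) (hy : Z.Sublist Y) : Z.length ≤ LCS X Y :=
  le_csSup (lcs_bdd X Y) ⟨Z, rfl, hx, hy⟩

lemma lcs_nil (X : List α) : LCS X [] = 0 := by
  obtain ⟨Z, hl, _, hy⟩ := exists_lcs X ([] : List α)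
  rw [← hl, List.sublist_nil.mp hy]; rfl

lemma lcs_le {X Y : List α} {c : ℕ}
    (h : ∀ Z : List α, Z.Sublist X → Z.Sublist Y → Z.length ≤ c) : LCS X Y ≤ c := by
  obtain ⟨Z, hl, hx, hy⟩ := exists_lcs X Y
  exact hl ▸ h Z hx hy

lemma lcs_cons_right_le (σ : α) (X W : List α) : LCS X W ≤ LCS X (σ :: W) := by
  obtain ⟨Z, hl, hx, hy⟩ := exists_lcs X W
  exact hl ▸ le_lcs hx (hy.cons σ)

lemma lcs_cons_not_mem {σ : α} {X : List α} (h : σ ∉ X) (W : List α) :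
    LCS X (σ :: W) = LCS X W := by
  refine le_antisymm (lcs_le fun Z hx hy => ?_) (lcs_cons_right_le σ X W)
  rcases List.sublist_cons_iff.mp hy with hy' | ⟨r, rfl, hr⟩
  · exact le_lcs hx hy'
  · exact absurd (hx.mem (List.mem_cons_self (a := σ) (l := r))) h

lemma lcs_cons_split {σ : α} {X₁ : List α} (h : σ ∉ X₁) (X₂ W : List α) :
    LCS (X₁ ++ σ :: X₂) (σ :: W) = max (LCS (X₁ ++ σ :: X₂) W) (1 + LCS X₂ W) := by
  refine le_antisymm (lcs_le fun Z hx hy => ?_) (max_le ?_ ?_)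
  · rcases List.sublist_cons_iff.mp hy with hy' | ⟨r, rfl, hr⟩
    · exact le_trans (le_lcs hx hy') (le_max_left _ _)
    · -- σ :: r sublist of X₁ ++ σ :: X₂ with σ ∉ X₁
      obtain ⟨U, V, hUV, hU, hV⟩ := List.sublist_append_iff.mp hx
      have hrX₂ : r.Sublist X₂ := by
        match U, hUV with
        | [], hUV =>
          simp at hUV
          rcases List.sublist_cons_iff.mp (hUV ▸ hV) with h1 | ⟨r', hr', hr''⟩
          · exact (List.sublist_cons_self σ r).trans h1
          · cases hr'; exact hr''
        | a :: U', hUV =>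
          have ha : σ = a := by simpa using congrArg (·.head?) hUV
          exact absurd (hU.mem (ha ▸ List.mem_cons_self (a := a) (l := U'))) h
      have h1 := le_lcs hrX₂ hr
      have : (σ :: r).length = r.length + 1 := by simp
      rw [this]
      have : r.length + 1 ≤ 1 + LCS X₂ W := by omega
      exact this.trans (le_max_right _ _)
  · exact lcs_cons_right_le σ _ W
  · obtain ⟨Z, hl, hx, hy⟩ := exists_lcs X₂ W
    have hs : (σ :: Z).Sublist (X₁ ++ σ :: X₂) :=
      (hx.cons₂ σ).trans (List.sublist_append_right X₁ (σ::X₂))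
    have h2 : (σ :: Z).Sublist (σ :: W) := hy.cons₂ σ
    have h3 := le_lcs hs h2
    simp only [List.length_cons, hl] at h3
    omega


lemma substr_zero (A : List α) (j : ℕ) : substr A 0 j = A.take j := by simp [substr]

lemma substr_self (A : List α) : substr A 0 0 = [] := by simp [substr]

lemma substr_full (B : List α) (i : ℕ) : substr B i B.length = B.drop i := by simp [substr]

lemma mem_substr {σ : α} {B : List α} {a b : ℕ} :
    σ ∈ substr B a b ↔ ∃ t, a < t ∧ t ≤ b ∧ t ≤ B.length ∧ B[t-1]? = some σ := by
  rw [substr, List.mem_iff_getElem]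
  constructor
  · rintro ⟨idx, hidx, hget⟩
    have hlen : idx < min b B.length - a := by simpa using hidx
    refine ⟨a + idx + 1, by omega, by omega, by omega, ?_⟩
    have h1 : ((B.take b).drop a)[idx] = B[a + idx]'(by omega) := by
      rw [List.getElem_drop, List.getElem_take]
    rw [show a + idx + 1 - 1 = a + idx from rfl, List.getElem?_eq_getElem (by omega)]
    rw [h1] at hget; rw [hget]
  · rintro ⟨t, h1, h2, h3, h4⟩
    have ht : t - 1 < B.length := by omega
    rw [List.getElem?_eq_getElem ht] at h4
    refine ⟨t - 1 - a, by simp; omega, ?_⟩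
    rw [List.getElem_drop, List.getElem_take]
    have he : B[a + (t - 1 - a)]? = some σ := by
      rw [show a + (t - 1 - a) = t - 1 by omega]
      exact List.getElem?_eq_getElem ht ▸ h4
    rw [List.getElem?_eq_getElem (by omega)] at he
    exact Option.some_injective _ he

lemma substr_decomp {σ : α} {B : List α} {a k : ℕ} (h1 : a < k) (h2 : k ≤ B.length)
    (h3 : B[k-1]? = some σ) :
    B.drop a = substr B a (k-1) ++ σ :: B.drop k := by
  have hk1 : k - 1 < B.length := by omega
  rw [List.getElem?_eq_getElem hk1] at h3
  have hget : B[k-1] = σ := Option.some_injective _ h3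
  conv_lhs => rw [← List.take_append_drop (k-1) B]
  rw [List.drop_append]
  have hlt : a ≤ (B.take (k-1)).length := by simp; omega
  have : a - (B.take (k-1)).length = 0 := by omega
  rw [this, List.drop_zero, List.drop_eq_getElem_cons hk1, hget]
  have : k - 1 + 1 = k := by omega
  rw [this, substr]


lemma enat_sInf_mem {S : Set ℕ∞} {k : ℕ} (h : sInf S = (k : ℕ∞)) : (k : ℕ∞) ∈ S := by
  by_contra hk
  have : (k : ℕ∞) + 1 ≤ sInf S := by
    apply le_sInf
    intro x hx
    have hkx : (k : ℕ∞) ≤ x := h ▸ sInf_le hx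
    have : (k : ℕ∞) ≠ x := fun he => hk (he ▸ hx)
    exact Order.add_one_le_of_lt (lt_of_le_of_ne hkx this)
  rw [h] at this
  have h2 : (↑(k+1) : ℕ∞) ≤ ↑k := by push_cast; exact this
  exact absurd (Nat.cast_le.mp h2) (by omega)

lemma nextmatch_spec {i k : ℕ} {σ : α} {B : List α} (h : nextmatch i σ B = (k : ℕ∞)) :
    i < k ∧ k ≤ B.length ∧ B[k-1]? = some σ ∧ σ ∉ substr B i (k-1) := by
  obtain ⟨k', hk', h1, h2, h3⟩ := enat_sInf_mem h
  have hkk : k = k' := by exact_mod_cast hk'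
  subst hkk
  refine ⟨h1, h2, h3, fun hmem => ?_⟩
  obtain ⟨t, ht1, ht2, ht3, ht4⟩ := mem_substr.mp hmem
  have : (↑k : ℕ∞) ≤ ↑t := h ▸ sInf_le ⟨t, rfl, ht1, ht3, ht4⟩
  have : k ≤ t := by exact_mod_cast this
  omega

lemma nextmatch_top {i : ℕ} {σ : α} {B : List α} (h : nextmatch i σ B = ⊤) :
    σ ∉ substr B i B.length := by
  intro hmem
  obtain ⟨t, ht1, ht2, ht3, ht4⟩ := mem_substr.mp hmem
  have : nextmatch i σ B ≤ ↑t := sInf_le ⟨t, rfl, ht1, ht3, ht4⟩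
  rw [h] at this
  exact absurd (top_le_iff.mp this).symm (by simp)

lemma nextmatch_pred_match {i : ℕ} {σ : α} {B : List α} (hi : 1 ≤ i) (hin : i ≤ B.length)
    (h : B[i-1]? = some σ) : nextmatch (i-1) σ B = (i : ℕ∞) := by
  refine le_antisymm (sInf_le ⟨i, rfl, by omega, hin, h⟩) (le_sInf ?_)
  rintro x ⟨k', rfl, h1, h2, h3⟩
  exact_mod_cast Nat.cast_le.mpr (by omega : i ≤ k')

lemma nextmatch_pred_nomatch {i : ℕ} {σ : α} {B : List α} (hi : 1 ≤ i)
    (h : B[i-1]? ≠ some σ) : nextmatch (i-1) σ B = nextmatch i σ B := by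
  unfold nextmatch
  congr 1
  ext x
  constructor
  · rintro ⟨k', rfl, h1, h2, h3⟩
    refine ⟨k', rfl, ?_, h2, h3⟩
    rcases Nat.lt_or_ge i k' with hlt | hge
    · exact hlt
    · have : k' = i := by omega
      exact absurd (this ▸ h3) h
  · rintro ⟨k', rfl, h1, h2, h3⟩
    exact ⟨k', rfl, by omega, h2, h3⟩


lemma tele (g : ℕ → ℤ) (a : ℕ) : ∀ b, a ≤ b →
    ∑ x ∈ Finset.Icc (a+1) b, (g (x-1) - g x) = g a - g b := by
  intro b
  induction b with
  | zero =>
    intro h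
    have : a = 0 := by omega
    subst this; simp
  | succ b ih =>
    intro h
    rcases Nat.lt_or_ge a (b+1) with h1 | h2
    · rw [Finset.sum_Icc_succ_top (by omega), ih (by omega)]
      have hb : (b+1) - 1 = b := rfl
      rw [hb]; ring
    · have : a = b + 1 := by omega
      subst this
      rw [Finset.Icc_eq_empty (by omega)]
      simp

lemma row_sum (D : ℕ → ℕ → ℤ) (i' j : ℕ) (hi : 1 ≤ i') :
    ∑ j' ∈ Finset.Icc 1 j, (-(density D i' j')) =
      (D (i'-1) j - D i' j) - (D (i'-1) 0 - D i' 0) := by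
  have ht := tele (fun j' => D (i'-1) j' - D i' j') 0 j (Nat.zero_le j)
  simp only [Nat.zero_add] at ht
  have hc : ∑ j' ∈ Finset.Icc 1 j, (-(density D i' j')) =
      -∑ x ∈ Finset.Icc 1 j, ((fun j' => D (i'-1) j' - D i' j') (x-1) -
        (fun j' => D (i'-1) j' - D i' j') x) := by
    rw [← Finset.sum_neg_distrib]
    apply Finset.sum_congr rfl
    intro x hx
    simp only [density]
    ring
  rw [hc, ht]
  ring

lemma Pmat_zero (A B : List α) (r : ℕ) : Pmat A B r 0 = 0 := by
  simp [Pmat, substr_self, lcs_nil]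

lemma Pdiff_sum (A B : List α) (i k j : ℕ) (hik : i ≤ k) :
    Pmat A B i j - Pmat A B k j =
      ∑ i' ∈ Finset.Icc (i+1) k, ∑ j' ∈ Finset.Icc 1 j, (-(density (Pmat A B) i' j')) := by
  have hcong : ∀ i' ∈ Finset.Icc (i+1) k,
      ∑ j' ∈ Finset.Icc 1 j, (-(density (Pmat A B) i' j')) =
        ((fun r => Pmat A B r j) (i'-1) - (fun r => Pmat A B r j) i') := by
    intro i' hi'
    simp only [Finset.mem_Icc] at hi'
    rw [row_sum _ _ _ (by omega), Pmat_zero, Pmat_zero]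
    simp
  rw [Finset.sum_congr rfl hcong, tele (fun r => Pmat A B r j) i k hik]

/-- There is a pivotal point of P□ in rows a+1,…,b and columns 1,…,j. -/
def Piv (A B : List α) (a b j : ℕ) : Prop :=
  ∃ i' j', a + 1 ≤ i' ∧ i' ≤ b ∧ 1 ≤ j' ∧ j' ≤ j ∧ density (Pmat A B) i' j' ≠ 0

lemma piv_mono {A B : List α} {a b j₁ j₂ : ℕ} (h : j₁ ≤ j₂) (hp : Piv A B a b j₁) :
    Piv A B a b j₂ := by
  obtain ⟨i', j', h1, h2, h3, h4, h5⟩ := hp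
  exact ⟨i', j', h1, h2, h3, by omega, h5⟩

lemma Pdiff_eq (A B : List α)
    (hVal : ∀ i, 1 ≤ i → i ≤ B.length → ∀ j, 1 ≤ j → j ≤ A.length →
      density (Pmat A B) i j ≠ 0 → density (Pmat A B) i j = -1)
    {i k j : ℕ} (hik : i ≤ k) (hk : k ≤ B.length) (hj : j ≤ A.length) :
    (¬ Piv A B i k j → Pmat A B i j = Pmat A B k j) ∧
    (Piv A B i k j → Pmat A B k j + 1 ≤ Pmat A B i j) := by
  have hsum := Pdiff_sum A B i k j hik
  have hterm : ∀ i' j', i+1 ≤ i' → i' ≤ k → 1 ≤ j' → j' ≤ j →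
      (0 ≤ -(density (Pmat A B) i' j') ∧
        (density (Pmat A B) i' j' ≠ 0 → -(density (Pmat A B) i' j') = 1)) := by
    intro i' j' h1 h2 h3 h4
    by_cases hne : density (Pmat A B) i' j' = 0
    · rw [hne]; norm_num
    · have := hVal i' (by omega) (by omega) j' h3 (by omega) hne
      constructor
      · omega
      · intro _; omega
  constructor
  · intro hnp
    have hz : ∑ i' ∈ Finset.Icc (i+1) k, ∑ j' ∈ Finset.Icc 1 j,
        (-(density (Pmat A B) i' j')) = 0 := by
      apply Finset.sum_eq_zero
      intro i' hi'
      apply Finset.sum_eq_zero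
      intro j' hj'
      simp only [Finset.mem_Icc] at hi' hj'
      by_contra hne
      exact hnp ⟨i', j', hi'.1, hi'.2, hj'.1, hj'.2, fun h0 => hne (by rw [h0]; ring)⟩
    rw [hz] at hsum
    omega
  · rintro ⟨i', j', h1, h2, h3, h4, h5⟩
    have hone := (hterm i' j' h1 h2 h3 h4).2 h5
    have hinner_nonneg : ∀ i'' ∈ Finset.Icc (i+1) k,
        0 ≤ ∑ j'' ∈ Finset.Icc 1 j, (-(density (Pmat A B) i'' j'')) := by
      intro i'' hi''
      simp only [Finset.mem_Icc] at hi''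
      apply Finset.sum_nonneg
      intro j'' hj''
      simp only [Finset.mem_Icc] at hj''
      exact (hterm i'' j'' hi''.1 hi''.2 hj''.1 hj''.2).1
    have h1' : (1:ℤ) ≤ ∑ j'' ∈ Finset.Icc 1 j, (-(density (Pmat A B) i' j'')) := by
      have := Finset.single_le_sum
        (f := fun j'' => -(density (Pmat A B) i' j''))
        (fun j'' hj'' => by
          simp only [Finset.mem_Icc] at hj''
          exact (hterm i' j'' h1 h2 hj''.1 hj''.2).1)
        (Finset.mem_Icc.mpr ⟨h3, h4⟩)
      beta_reduce at this
      omega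
    have h2' : ∑ j'' ∈ Finset.Icc 1 j, (-(density (Pmat A B) i' j'')) ≤
        ∑ i'' ∈ Finset.Icc (i+1) k, ∑ j'' ∈ Finset.Icc 1 j, (-(density (Pmat A B) i'' j'')) :=
      Finset.single_le_sum hinner_nonneg (Finset.mem_Icc.mpr ⟨h1, h2⟩)
    omega

lemma Q_top {σ : α} (A B : List α) {a : ℕ} (j : ℕ) (h : nextmatch a σ B = ⊤) :
    (LCS (substr B a B.length) (σ :: substr A 0 j) : ℤ) = Pmat A B a j := by
  rw [Pmat, lcs_cons_not_mem (nextmatch_top h)]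

lemma Q_k {σ : α} (A B : List α) {a k : ℕ} (j : ℕ) (h : nextmatch a σ B = (k : ℕ∞)) :
    (LCS (substr B a B.length) (σ :: substr A 0 j) : ℤ) =
      max (Pmat A B a j) (1 + Pmat A B k j) := by
  obtain ⟨h1, h2, h3, h4⟩ := nextmatch_spec h
  have hd := substr_decomp h1 h2 h3
  have hmax : LCS (substr B a B.length) (σ :: substr A 0 j) =
      max (LCS (substr B a B.length) (substr A 0 j))
        (1 + LCS (substr B k B.length) (substr A 0 j)) := by
    rw [substr_full B a, substr_full B k, hd, lcs_cons_split h4]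
  rw [hmax, Pmat, Pmat]
  push_cast [Nat.cast_max]
  ring_nf

lemma diff_top {σ : α} (A B : List α) (Diff : ℕ → ℕ → ℤ)
    (hDiff : ∀ i j, Diff i j =
      (LCS (substr B i B.length) (σ :: substr A 0 j) : ℤ) - Pmat A B i j)
    {a : ℕ} (j : ℕ) (h : nextmatch a σ B = ⊤) : Diff a j = 0 := by
  rw [hDiff, Q_top A B j h]; ring

lemma diff_val {σ : α} (A B : List α) (Diff : ℕ → ℕ → ℤ)
    (hDiff : ∀ i j, Diff i j =
      (LCS (substr B i B.length) (σ :: substr A 0 j) : ℤ) - Pmat A B i j)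
    (hVal : ∀ i, 1 ≤ i → i ≤ B.length → ∀ j, 1 ≤ j → j ≤ A.length →
      density (Pmat A B) i j ≠ 0 → density (Pmat A B) i j = -1)
    {a k : ℕ} (j : ℕ) (hk : nextmatch a σ B = (k : ℕ∞)) (hj : j ≤ A.length) :
    (¬ Piv A B a k j → Diff a j = 1) ∧ (Piv A B a k j → Diff a j = 0) := by
  obtain ⟨h1, h2, _, _⟩ := nextmatch_spec hk
  have hPd := Pdiff_eq A B hVal (le_of_lt h1) h2 hj
  rw [hDiff, Q_k A B j hk]
  constructor
  · intro hnp
    rw [hPd.1 hnp, max_eq_right (by omega)]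
    ring
  · intro hp
    have := hPd.2 hp
    rw [max_eq_left (by omega)]
    ring

lemma jmin_le_of_piv {A B : List α} {m i k j : ℕ} (hj : j ≤ m) (hp : Piv A B i k j) :
    jminP A B m i k ≤ (j : ℕ∞) := by
  obtain ⟨i', j', h1, h2, h3, h4, h5⟩ := hp
  exact le_trans (sInf_le ⟨j', rfl, h3, by omega, i', h1, h2, h5⟩) (Nat.cast_le.mpr h4)

lemma jmin_attained {A B : List α} {m i k j₀ : ℕ} (h : jminP A B m i k = (j₀ : ℕ∞)) :
    1 ≤ j₀ ∧ j₀ ≤ m ∧ ∃ i', i + 1 ≤ i' ∧ i' ≤ k ∧ density (Pmat A B) i' j₀ ≠ 0 := by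
  obtain ⟨j', hcoe, h1, h2, h3⟩ := enat_sInf_mem h
  have : j₀ = j' := by exact_mod_cast hcoe
  subst this
  exact ⟨h1, h2, h3⟩

lemma piv_of_jmin_le {A B : List α} {m i k j : ℕ} (h : jminP A B m i k ≤ (j : ℕ∞)) :
    Piv A B i k j := by
  have hne : jminP A B m i k ≠ ⊤ := by
    intro ht
    rw [ht] at h
    exact absurd (top_le_iff.mp h).symm (by simp)
  obtain ⟨j₀, hj₀⟩ : ∃ j₀ : ℕ, jminP A B m i k = (j₀ : ℕ∞) := by
    cases hx : jminP A B m i k with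
    | top => exact absurd hx hne
    | coe j₀ => exact ⟨j₀, rfl⟩
  obtain ⟨h1, h2, i', h3, h4, h5⟩ := jmin_attained hj₀
  have hle : j₀ ≤ j := by rw [hj₀] at h; exact_mod_cast h
  exact ⟨i', j₀, h3, h4, h1, hle, h5⟩

lemma not_piv_of_lt_jmin {A B : List α} {m i k j : ℕ} (hj : j ≤ m)
    (h : (j : ℕ∞) < jminP A B m i k) : ¬ Piv A B i k j :=
  fun hp => absurd (jmin_le_of_piv hj hp) (not_le.mpr h)

lemma piv_pred_iff {A B : List α} {i k j : ℕ} (hi : 1 ≤ i) (hik : i ≤ k) :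
    Piv A B (i-1) k j ↔ Piv A B i k j ∨
      (∃ j', 1 ≤ j' ∧ j' ≤ j ∧ density (Pmat A B) i j' ≠ 0) := by
  constructor
  · rintro ⟨i', j', h1, h2, h3, h4, h5⟩
    rcases Nat.lt_or_ge i i' with hlt | hge
    · exact Or.inl ⟨i', j', by omega, h2, h3, h4, h5⟩
    · have : i' = i := by omega
      subst this
      exact Or.inr ⟨j', h3, h4, h5⟩
  · rintro (⟨i', j', h1, h2, h3, h4, h5⟩ | ⟨j', h3, h4, h5⟩)
    · exact ⟨i', j', by omega, h2, h3, h4, h5⟩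
    · exact ⟨i, j', by omega, hik, h3, h4, h5⟩

/-- description of row i of the density matrix of Diff
(columns 1,…,m only), in the two cases B[i] ≠ σ and B[i] = σ. -/
theorem stmt_18 {α : Type*} (A B : List α) (m n : ℕ)
    (hA : A.length = m) (hB : B.length = n) (σ : α)
    (Diff : ℕ → ℕ → ℤ)
    (hDiff : ∀ i j, Diff i j =
      (LCS (substr B i n) (σ :: substr A 0 j) : ℤ) - Pmat A B i j)
    (hRow : ∀ i, 1 ≤ i → i ≤ n → ∀ j₁ j₂, 1 ≤ j₁ → j₁ ≤ m → 1 ≤ j₂ → j₂ ≤ m →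
      density (Pmat A B) i j₁ ≠ 0 → density (Pmat A B) i j₂ ≠ 0 → j₁ = j₂)
    (hCol : ∀ j, 1 ≤ j → j ≤ m → ∀ i₁ i₂, 1 ≤ i₁ → i₁ ≤ n → 1 ≤ i₂ → i₂ ≤ n →
      density (Pmat A B) i₁ j ≠ 0 → density (Pmat A B) i₂ j ≠ 0 → i₁ = i₂)
    (hVal : ∀ i, 1 ≤ i → i ≤ n → ∀ j, 1 ≤ j → j ≤ m →
      density (Pmat A B) i j ≠ 0 → density (Pmat A B) i j = -1)
    (i : ℕ) (hi1 : 1 ≤ i) (hin : i ≤ n) :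
    -- Part (1): B[i] ≠ σ
    (B[i - 1]? ≠ some σ →
      ((∃ j, 1 ≤ j ∧ j ≤ m ∧ density Diff i j ≠ 0) ↔
        ∃ k : ℕ, nextmatch i σ B = (k : ℕ∞) ∧
          ∃ j, 1 ≤ j ∧ j ≤ m ∧ density (Pmat A B) i j ≠ 0 ∧
            (j : ℕ∞) < jminP A B m i k) ∧
      (∀ k : ℕ, nextmatch i σ B = (k : ℕ∞) →
        ∀ j, 1 ≤ j → j ≤ m → density (Pmat A B) i j ≠ 0 →
          (j : ℕ∞) < jminP A B m i k →
          density Diff i j = 1 ∧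
          (∀ j₀ : ℕ, jminP A B m i k = (j₀ : ℕ∞) → density Diff i j₀ = -1) ∧
          (∀ j'', 1 ≤ j'' → j'' ≤ m → j'' ≠ j →
            jminP A B m i k ≠ (j'' : ℕ∞) → density Diff i j'' = 0))) ∧
    -- Part (2): B[i] = σ
    (B[i - 1]? = some σ →
      (∀ k : ℕ, nextmatch i σ B = (k : ℕ∞) →
        ∀ j₀ : ℕ, jminP A B m i k = (j₀ : ℕ∞) → density Diff i j₀ = -1) ∧
      (∀ j, 1 ≤ j → j ≤ m → density (Pmat A B) i j ≠ 0 → density Diff i j = 1) ∧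
      (∀ j'', 1 ≤ j'' → j'' ≤ m → density (Pmat A B) i j'' = 0 →
        (∀ k j₀ : ℕ, nextmatch i σ B = (k : ℕ∞) →
          jminP A B m i k = (j₀ : ℕ∞) → j'' ≠ j₀) →
        density Diff i j'' = 0)) := by
  subst hA
  subst hB
  have dens : ∀ j : ℕ, density Diff i j
      = Diff i j + Diff (i-1) (j-1) - Diff (i-1) j - Diff i (j-1) := fun _ => rfl
  constructor
  · -- Part (1): B[i] ≠ σ
    intro hBi
    have hnmp : nextmatch (i-1) σ B = nextmatch i σ B := nextmatch_pred_nomatch hi1 hBi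
    have hmain : ∀ k : ℕ, nextmatch i σ B = (k : ℕ∞) →
        ∀ j, 1 ≤ j → j ≤ A.length → density (Pmat A B) i j ≠ 0 →
        (j : ℕ∞) < jminP A B A.length i k →
        density Diff i j = 1 ∧
        (∀ j₀ : ℕ, jminP A B A.length i k = (j₀ : ℕ∞) → density Diff i j₀ = -1) ∧
        (∀ j'', 1 ≤ j'' → j'' ≤ A.length → j'' ≠ j →
          jminP A B A.length i k ≠ (j'' : ℕ∞) → density Diff i j'' = 0) := by
      intro k hnm j hj1 hjm hpiv hlt
      obtain ⟨hik, hkn, -, -⟩ := nextmatch_spec hnm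
      have hnm' : nextmatch (i-1) σ B = (k : ℕ∞) := hnmp.trans hnm
      have dvI : ∀ j' : ℕ, j' ≤ A.length →
          (¬ Piv A B i k j' → Diff i j' = 1) ∧ (Piv A B i k j' → Diff i j' = 0) :=
        fun j' hj' => diff_val A B Diff hDiff hVal j' hnm hj'
      have dvP : ∀ j' : ℕ, j' ≤ A.length →
          (¬ Piv A B (i-1) k j' → Diff (i-1) j' = 1) ∧
          (Piv A B (i-1) k j' → Diff (i-1) j' = 0) :=
        fun j' hj' => diff_val A B Diff hDiff hVal j' hnm' hj'
      have huniq : ∀ j', 1 ≤ j' → j' ≤ A.length → density (Pmat A B) i j' ≠ 0 → j' = j :=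
        fun j' a b c => hRow i hi1 hin j' j a b hj1 hjm c hpiv
      have hppi : ∀ j'', Piv A B (i-1) k j'' ↔ Piv A B i k j'' ∨
          (∃ j', 1 ≤ j' ∧ j' ≤ j'' ∧ density (Pmat A B) i j' ≠ 0) :=
        fun j'' => piv_pred_iff hi1 (le_of_lt hik)
      refine ⟨?_, ?_, ?_⟩
      · have f1 : ¬ Piv A B i k j := not_piv_of_lt_jmin hjm hlt
        have f2 : ¬ Piv A B i k (j-1) := fun hp => f1 (piv_mono (by omega) hp)
        have f3 : Piv A B (i-1) k j := (hppi j).mpr (Or.inr ⟨j, hj1, le_refl j, hpiv⟩)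
        have f4 : ¬ Piv A B (i-1) k (j-1) := by
          intro hp
          rcases (hppi (j-1)).mp hp with hp' | ⟨j', a, b, c⟩
          · exact f2 hp'
          · have := huniq j' a (by omega) c
            omega
        rw [dens j, (dvI j hjm).1 f1, (dvI (j-1) (by omega)).1 f2,
          (dvP j hjm).2 f3, (dvP (j-1) (by omega)).1 f4]
        ring
      · intro j₀ hj₀
        obtain ⟨hj₀1, hj₀m, i₁, hi₁1, hi₁2, hi₁d⟩ := jmin_attained hj₀
        have hjlt : j < j₀ := by
          rw [hj₀] at hlt; exact_mod_cast hlt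
        have f1 : Piv A B i k j₀ := ⟨i₁, j₀, hi₁1, hi₁2, hj₀1, le_refl j₀, hi₁d⟩
        have f2 : ¬ Piv A B i k (j₀-1) := by
          intro hp
          have h := jmin_le_of_piv (m := A.length) (by omega) hp
          rw [hj₀] at h
          have : j₀ ≤ j₀ - 1 := by exact_mod_cast h
          omega
        have f3 : Piv A B (i-1) k j₀ := (hppi j₀).mpr (Or.inl f1)
        have f4 : Piv A B (i-1) k (j₀-1) := (hppi (j₀-1)).mpr (Or.inr ⟨j, hj1, by omega, hpiv⟩)
        rw [dens j₀, (dvI j₀ hj₀m).2 f1, (dvI (j₀-1) (by omega)).1 f2,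
          (dvP j₀ hj₀m).2 f3, (dvP (j₀-1) (by omega)).2 f4]
        ring
      · intro j'' h1 h2 hne hjm''
        rcases Ne.lt_or_gt hjm'' with hgt | hlt2
        · obtain ⟨j₀, hj₀⟩ : ∃ j₀ : ℕ, jminP A B A.length i k = (j₀ : ℕ∞) := by
            cases hx : jminP A B A.length i k with
            | top => exact absurd hx (ne_top_of_lt hgt)
            | coe j₀ => exact ⟨j₀, rfl⟩
          obtain ⟨hj₀1, hj₀m, i₁, hi₁1, hi₁2, hi₁d⟩ := jmin_attained hj₀
          have hj₀lt : j₀ < j'' := by rw [hj₀] at hgt; exact_mod_cast hgt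
          have f2 : Piv A B i k (j''-1) := ⟨i₁, j₀, hi₁1, hi₁2, hj₀1, by omega, hi₁d⟩
          have f1 : Piv A B i k j'' := piv_mono (by omega) f2
          have f3 : Piv A B (i-1) k j'' := (hppi j'').mpr (Or.inl f1)
          have f4 : Piv A B (i-1) k (j''-1) := (hppi (j''-1)).mpr (Or.inl f2)
          rw [dens j'', (dvI j'' h2).2 f1, (dvI (j''-1) (by omega)).2 f2,
            (dvP j'' h2).2 f3, (dvP (j''-1) (by omega)).2 f4]
          ring
        · have f1 : ¬ Piv A B i k j'' := not_piv_of_lt_jmin h2 hlt2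
          have f2 : ¬ Piv A B i k (j''-1) := fun hp => f1 (piv_mono (by omega) hp)
          have hRiff : (∃ j', 1 ≤ j' ∧ j' ≤ j'' ∧ density (Pmat A B) i j' ≠ 0) ↔
              (∃ j', 1 ≤ j' ∧ j' ≤ j''-1 ∧ density (Pmat A B) i j' ≠ 0) := by
            constructor
            · rintro ⟨j', a, b, c⟩
              have := huniq j' a (by omega) c
              exact ⟨j', a, by omega, c⟩
            · rintro ⟨j', a, b, c⟩
              exact ⟨j', a, by omega, c⟩
          have e12 : Diff i j'' = Diff i (j''-1) := by
            rw [(dvI j'' h2).1 f1, (dvI (j''-1) (by omega)).1 f2]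
          have e34 : Diff (i-1) j'' = Diff (i-1) (j''-1) := by
            by_cases hR : ∃ j', 1 ≤ j' ∧ j' ≤ j'' ∧ density (Pmat A B) i j' ≠ 0
            · rw [(dvP j'' h2).2 ((hppi j'').mpr (Or.inr hR)),
                (dvP (j''-1) (by omega)).2 ((hppi (j''-1)).mpr (Or.inr (hRiff.mp hR)))]
            · have f3 : ¬ Piv A B (i-1) k j'' := by
                intro hp
                rcases (hppi j'').mp hp with h | h
                · exact f1 h
                · exact hR h
              have f4 : ¬ Piv A B (i-1) k (j''-1) := by
                intro hp
                rcases (hppi (j''-1)).mp hp with h | h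
                · exact f2 h
                · exact hR (hRiff.mpr h)
              rw [(dvP j'' h2).1 f3, (dvP (j''-1) (by omega)).1 f4]
          rw [dens j'', e12, e34]; ring
    refine ⟨⟨?_, ?_⟩, hmain⟩
    · rintro ⟨j, hj1, hjm, hdne⟩
      cases hnm : nextmatch i σ B with
      | top =>
        exfalso
        apply hdne
        rw [dens j, diff_top A B Diff hDiff j hnm, diff_top A B Diff hDiff (j-1) hnm,
          diff_top A B Diff hDiff j (hnmp.trans hnm),
          diff_top A B Diff hDiff (j-1) (hnmp.trans hnm)]
        ring
      | coe k =>
        refine ⟨k, rfl, ?_⟩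
        by_contra hno
        push_neg at hno
        apply absurd _ hdne
        obtain ⟨hik, hkn, -, -⟩ := nextmatch_spec hnm
        have hnm' : nextmatch (i-1) σ B = (k : ℕ∞) := hnmp.trans hnm
        have dvI : ∀ j' : ℕ, j' ≤ A.length →
            (¬ Piv A B i k j' → Diff i j' = 1) ∧ (Piv A B i k j' → Diff i j' = 0) :=
          fun j' hj' => diff_val A B Diff hDiff hVal j' hnm hj'
        have dvP : ∀ j' : ℕ, j' ≤ A.length →
            (¬ Piv A B (i-1) k j' → Diff (i-1) j' = 1) ∧
            (Piv A B (i-1) k j' → Diff (i-1) j' = 0) :=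
          fun j' hj' => diff_val A B Diff hDiff hVal j' hnm' hj'
        have hsame : ∀ j'', j'' ≤ A.length → (Piv A B (i-1) k j'' ↔ Piv A B i k j'') := by
          intro j'' hj''
          rw [piv_pred_iff hi1 (le_of_lt hik)]
          constructor
          · rintro (hp | ⟨j', a, b, c⟩)
            · exact hp
            · exact piv_mono b (piv_of_jmin_le (hno j' a (by omega) c))
          · exact Or.inl
        have e1 : Diff (i-1) j = Diff i j := by
          by_cases hp : Piv A B i k j
          · rw [(dvP j hjm).2 ((hsame j hjm).mpr hp), (dvI j hjm).2 hp]
          · rw [(dvP j hjm).1 (fun hq => hp ((hsame j hjm).mp hq)), (dvI j hjm).1 hp]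
        have e2 : Diff (i-1) (j-1) = Diff i (j-1) := by
          by_cases hp : Piv A B i k (j-1)
          · rw [(dvP (j-1) (by omega)).2 ((hsame (j-1) (by omega)).mpr hp),
              (dvI (j-1) (by omega)).2 hp]
          · rw [(dvP (j-1) (by omega)).1 (fun hq => hp ((hsame (j-1) (by omega)).mp hq)),
              (dvI (j-1) (by omega)).1 hp]
        rw [dens j, e1, e2]; ring
    · rintro ⟨k, hnm, j, hj1, hjm, hpiv, hlt⟩
      exact ⟨j, hj1, hjm, by rw [(hmain k hnm j hj1 hjm hpiv hlt).1]; norm_num⟩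
  · -- Part (2): B[i] = σ
    intro hBi
    have hnm' : nextmatch (i-1) σ B = (i : ℕ∞) := nextmatch_pred_match hi1 hin hBi
    have dvP : ∀ j' : ℕ, j' ≤ A.length →
        (¬ Piv A B (i-1) i j' → Diff (i-1) j' = 1) ∧
        (Piv A B (i-1) i j' → Diff (i-1) j' = 0) :=
      fun j' hj' => diff_val A B Diff hDiff hVal j' hnm' hj'
    have hppR : ∀ j'', Piv A B (i-1) i j'' ↔
        (∃ j', 1 ≤ j' ∧ j' ≤ j'' ∧ density (Pmat A B) i j' ≠ 0) := by
      intro j''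
      rw [piv_pred_iff hi1 (le_refl i)]
      constructor
      · rintro (⟨i', j', a, b, c, d, e⟩ | h)
        · omega
        · exact h
      · exact Or.inr
    refine ⟨?_, ?_, ?_⟩
    · intro k hnm j₀ hj₀
      obtain ⟨hik, hkn, -, -⟩ := nextmatch_spec hnm
      have dvI : ∀ j' : ℕ, j' ≤ A.length →
          (¬ Piv A B i k j' → Diff i j' = 1) ∧ (Piv A B i k j' → Diff i j' = 0) :=
        fun j' hj' => diff_val A B Diff hDiff hVal j' hnm hj'
      obtain ⟨hj₀1, hj₀m, i₁, hi₁1, hi₁2, hi₁d⟩ := jmin_attained hj₀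
      have f1 : Piv A B i k j₀ := ⟨i₁, j₀, hi₁1, hi₁2, hj₀1, le_refl j₀, hi₁d⟩
      have f2 : ¬ Piv A B i k (j₀-1) := by
        intro hp
        have h := jmin_le_of_piv (m := A.length) (by omega) hp
        rw [hj₀] at h
        have : j₀ ≤ j₀ - 1 := by exact_mod_cast h
        omega
      have hRiff : (∃ j', 1 ≤ j' ∧ j' ≤ j₀ ∧ density (Pmat A B) i j' ≠ 0) ↔
          (∃ j', 1 ≤ j' ∧ j' ≤ j₀-1 ∧ density (Pmat A B) i j' ≠ 0) := by
        constructor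
        · rintro ⟨j', a, b, c⟩
          rcases Nat.lt_or_ge j' j₀ with hlt | hge
          · exact ⟨j', a, by omega, c⟩
          · have hj'j₀ : j' = j₀ := by omega
            subst hj'j₀
            exact absurd (hCol j' hj₀1 hj₀m i i₁ hi1 hin (by omega) (by omega) c hi₁d)
              (by omega)
        · rintro ⟨j', a, b, c⟩
          exact ⟨j', a, by omega, c⟩
      have e34 : Diff (i-1) j₀ = Diff (i-1) (j₀-1) := by
        by_cases hR : ∃ j', 1 ≤ j' ∧ j' ≤ j₀ ∧ density (Pmat A B) i j' ≠ 0
        · rw [(dvP j₀ hj₀m).2 ((hppR j₀).mpr hR),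
            (dvP (j₀-1) (by omega)).2 ((hppR (j₀-1)).mpr (hRiff.mp hR))]
        · rw [(dvP j₀ hj₀m).1 (fun hq => hR ((hppR j₀).mp hq)),
            (dvP (j₀-1) (by omega)).1 (fun hq => hR (hRiff.mpr ((hppR (j₀-1)).mp hq)))]
      rw [dens j₀, (dvI j₀ hj₀m).2 f1, (dvI (j₀-1) (by omega)).1 f2, e34]
      ring
    · intro j hj1 hjm hpiv
      have f3 : Piv A B (i-1) i j := (hppR j).mpr ⟨j, hj1, le_refl j, hpiv⟩
      have f4 : ¬ Piv A B (i-1) i (j-1) := by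
        intro hp
        obtain ⟨j', a, b, c⟩ := (hppR (j-1)).mp hp
        have := hRow i hi1 hin j' j a (by omega) hj1 hjm c hpiv
        omega
      have e3 : Diff (i-1) j = 0 := (dvP j hjm).2 f3
      have e4 : Diff (i-1) (j-1) = 1 := (dvP (j-1) (by omega)).1 f4
      cases hnm : nextmatch i σ B with
      | top =>
        rw [dens j, diff_top A B Diff hDiff j hnm, diff_top A B Diff hDiff (j-1) hnm, e3, e4]
        ring
      | coe k =>
        obtain ⟨hik, hkn, -, -⟩ := nextmatch_spec hnm
        have dvI : ∀ j' : ℕ, j' ≤ A.length →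
            (¬ Piv A B i k j' → Diff i j' = 1) ∧ (Piv A B i k j' → Diff i j' = 0) :=
          fun j' hj' => diff_val A B Diff hDiff hVal j' hnm hj'
        have hiff : Piv A B i k j ↔ Piv A B i k (j-1) := by
          constructor
          · rintro ⟨i', j', a, b, c, d, e⟩
            rcases Nat.lt_or_ge j' j with hlt | hge
            · exact ⟨i', j', a, b, c, by omega, e⟩
            · have hj'j : j' = j := by omega
              subst hj'j
              exact absurd (hCol j' hj1 hjm i i' hi1 hin (by omega) (by omega) hpiv e)
                (by omega)
          · exact piv_mono (by omega)
        have e12 : Diff i j = Diff i (j-1) := by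
          by_cases hp : Piv A B i k j
          · rw [(dvI j hjm).2 hp, (dvI (j-1) (by omega)).2 (hiff.mp hp)]
          · rw [(dvI j hjm).1 hp, (dvI (j-1) (by omega)).1 (fun hq => hp (hiff.mpr hq))]
        rw [dens j, e12, e3, e4]
        ring
    · intro j'' h1 h2 hz hcond
      have hRiff : Piv A B (i-1) i j'' ↔ Piv A B (i-1) i (j''-1) := by
        rw [hppR j'', hppR (j''-1)]
        constructor
        · rintro ⟨j', a, b, c⟩
          rcases Nat.lt_or_ge j' j'' with hlt | hge
          · exact ⟨j', a, by omega, c⟩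
          · have hj'j : j' = j'' := by omega
            subst hj'j
            exact absurd hz c
        · rintro ⟨j', a, b, c⟩
          exact ⟨j', a, by omega, c⟩
      have e34 : Diff (i-1) j'' = Diff (i-1) (j''-1) := by
        by_cases hp : Piv A B (i-1) i j''
        · rw [(dvP j'' h2).2 hp, (dvP (j''-1) (by omega)).2 (hRiff.mp hp)]
        · rw [(dvP j'' h2).1 hp, (dvP (j''-1) (by omega)).1 (fun hq => hp (hRiff.mpr hq))]
      cases hnm : nextmatch i σ B with
      | top =>
        rw [dens j'', diff_top A B Diff hDiff j'' hnm,
          diff_top A B Diff hDiff (j''-1) hnm, e34]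
        ring
      | coe k =>
        obtain ⟨hik, hkn, -, -⟩ := nextmatch_spec hnm
        have dvI : ∀ j' : ℕ, j' ≤ A.length →
            (¬ Piv A B i k j' → Diff i j' = 1) ∧ (Piv A B i k j' → Diff i j' = 0) :=
          fun j' hj' => diff_val A B Diff hDiff hVal j' hnm hj'
        have hiff : Piv A B i k j'' ↔ Piv A B i k (j''-1) := by
          constructor
          · intro hp
            have hle := jmin_le_of_piv h2 hp
            obtain ⟨j₀, hj₀⟩ : ∃ j₀ : ℕ, jminP A B A.length i k = (j₀ : ℕ∞) := by
              cases hx : jminP A B A.length i k with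
              | top =>
                rw [hx] at hle
                exact absurd (top_le_iff.mp hle).symm (by simp)
              | coe j₀ => exact ⟨j₀, rfl⟩
            obtain ⟨hj₀1, hj₀m, i₁, hi₁1, hi₁2, hi₁d⟩ := jmin_attained hj₀
            have hne' := hcond k j₀ hnm hj₀
            have hj₀le : j₀ ≤ j'' := by rw [hj₀] at hle; exact_mod_cast hle
            exact ⟨i₁, j₀, hi₁1, hi₁2, hj₀1, by omega, hi₁d⟩
          · exact piv_mono (by omega)
        have e12 : Diff i j'' = Diff i (j''-1) := by
          by_cases hp : Piv A B i k j''
          · rw [(dvI j'' h2).2 hp, (dvI (j''-1) (by omega)).2 (hiff.mp hp)]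
          · rw [(dvI j'' h2).1 hp, (dvI (j''-1) (by omega)).1 (fun hq => hp (hiff.mpr hq))]
        rw [dens j'', e12, e34]
        ring
end

section
/- Let A, B be strings of lengths m and n and σ a character; set B' = B·σ (σ appended to B). Let P and P' be the all scores matrices P of the pairs (A,B) and (A,B') respectively (so P' is indexed by [0:n+1]×[0:m]), and let K' be the all scores matrix K of the pair (A,B') (indexed by [0:n+1]×[0:n+1]). Define Diff[i,m] = P'[i,m] − P[i,m] for i ∈ [0:n]. Then for every i ∈ [1:n], the density entry K'□[i,n+1] equals Diff[i,m] − Diff[i−1,m]; in particular, if Diff[i,m] = 1 and Diff[i−1,m] = 0 then (i,n+1) is a pivotal point of K'□ with K'□[i,n+1] = 1. Moreover, if σ does not occur in A, then K'□[n+1,n+1] = 1. -/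
variable {α : Type*}

lemma LCS_nil' (A : List α) : LCS ([] : List α) A = 0 := by
  unfold LCS
  convert csSup_singleton 0 using 2
  · rfl
  ext k
  simp only [Set.mem_setOf_eq, List.sublist_nil, Set.mem_singleton_iff]
  constructor
  · rintro ⟨Z, rfl, rfl, -⟩; rfl
  · rintro rfl; exact ⟨[], rfl, rfl, List.nil_sublist _⟩

lemma LCS_single' (σ : α) (A : List α) (h : σ ∉ A) : LCS [σ] A = 0 := by
  unfold LCS
  convert csSup_singleton 0 using 2
  · rfl
  ext k
  simp only [Set.mem_setOf_eq, Set.mem_singleton_iff]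
  constructor
  · rintro ⟨Z, rfl, h1, h2⟩
    rcases List.sublist_singleton.mp h1 with rfl | rfl
    · rfl
    · exact absurd (h2.mem (List.mem_singleton_self σ)) h
  · rintro rfl; exact ⟨[], rfl, List.nil_sublist _, List.nil_sublist _⟩

lemma Kmat_eq_Pmat' {A B : List α} {m n : ℕ} (hA : A.length = m) (hB : B.length = n)
    (σ : α) (i : ℕ) (hi : i ≤ n + 1) :
    Kmat A (B ++ [σ]) i (n + 1) = Pmat A (B ++ [σ]) i m := by
  have hlen : (B ++ [σ]).length = n + 1 := by simp [hB]
  have e1 : (B ++ [σ]).take (n + 1) = B ++ [σ] := List.take_of_length_le hlen.le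
  have e2 : A.take m = A := List.take_of_length_le hA.le
  unfold Kmat Pmat substr
  rw [if_pos hi, e1, List.take_length, e2, List.drop_zero]

lemma Kmat_eq_Pmat'' {A B : List α} {m n : ℕ} (hA : A.length = m) (hB : B.length = n)
    (σ : α) (i : ℕ) (hi : i ≤ n) :
    Kmat A (B ++ [σ]) i n = Pmat A B i m := by
  have e2 : A.take m = A := List.take_of_length_le hA.le
  have e3 : (B ++ [σ]).take n = B := by rw [← hB]; exact List.take_left
  unfold Kmat Pmat substr
  rw [if_pos hi, e3, List.take_length, e2, List.drop_zero]

/-- appending σ to B; the new column n+1 of the density matrix of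
the new K is determined by the differences of column m of the P matrices, and if
σ does not occur in A then K'□[n+1,n+1] = 1. -/
theorem stmt_19 {α : Type*} (A B : List α) (m n : ℕ)
    (hA : A.length = m) (hB : B.length = n) (σ : α) :
    (∀ i, 1 ≤ i → i ≤ n →
      (density (Kmat A (B ++ [σ])) i (n + 1) =
        (Pmat A (B ++ [σ]) i m - Pmat A B i m) -
          (Pmat A (B ++ [σ]) (i - 1) m - Pmat A B (i - 1) m)) ∧
      ((Pmat A (B ++ [σ]) i m - Pmat A B i m = 1 ∧
          Pmat A (B ++ [σ]) (i - 1) m - Pmat A B (i - 1) m = 0) →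
        density (Kmat A (B ++ [σ])) i (n + 1) = 1)) ∧
    (σ ∉ A → density (Kmat A (B ++ [σ])) (n + 1) (n + 1) = 1) := by
  
  constructor
  · intro i hi1 hi2
    have key : density (Kmat A (B ++ [σ])) i (n + 1) =
        (Pmat A (B ++ [σ]) i m - Pmat A B i m) -
          (Pmat A (B ++ [σ]) (i - 1) m - Pmat A B (i - 1) m) := by
      unfold density
      have e1 := Kmat_eq_Pmat' hA hB σ i (by omega)
      have e2 := Kmat_eq_Pmat' hA hB σ (i - 1) (by omega)
      have hn : n + 1 - 1 = n := rfl
      have e3 := Kmat_eq_Pmat'' hA hB σ i hi2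
      have e4 := Kmat_eq_Pmat'' hA hB σ (i - 1) (by omega)
      rw [hn, e1, e2, e3, e4]
      ring
    refine ⟨key, fun ⟨h1, h2⟩ => ?_⟩
    rw [key, h1, h2]; ring
  · intro hσ
    unfold density
    have hn : n + 1 - 1 = n := rfl
    rw [hn]
    have h1 : Kmat A (B ++ [σ]) (n + 1) (n + 1) = 0 := by
      unfold Kmat substr
      rw [if_pos le_rfl]
      have : (((B ++ [σ]).take (n + 1)).drop (n + 1) : List α) = [] := by
        apply List.drop_eq_nil_of_le
        simp [hB]
      rw [this, LCS_nil']; rfl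
    have h2 : Kmat A (B ++ [σ]) n n = 0 := by
      unfold Kmat substr
      rw [if_pos le_rfl]
      have : (((B ++ [σ]).take n).drop n : List α) = [] := by
        apply List.drop_eq_nil_of_le
        simp [hB]
      rw [this, LCS_nil']; rfl
    have h3 : Kmat A (B ++ [σ]) n (n + 1) = 0 := by
      unfold Kmat substr
      rw [if_pos (by omega)]
      have hlen : (B ++ [σ]).length = n + 1 := by simp [hB]
      have : (((B ++ [σ]).take (n + 1)).drop n : List α) = [σ] := by
        rw [← hlen, List.take_length, ← hB, List.drop_left]
      rw [this, LCS_single' σ A hσ]; rfl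
    have h4 : Kmat A (B ++ [σ]) (n + 1) n = -1 := by
      unfold Kmat
      rw [if_neg (by omega)]
      push_cast; ring
    rw [h1, h2, h3, h4]; ring
end
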